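/- For NIM with subtraction set A = {1, L, L+1} where L is even and L ≥ 2, the second player wins the game with n stones if and only if n mod 2L is an even number in {0, 2, 4, ..., L-2}. -/
import Mathlib

lemma sub_mod_cases (m a n : ℕ) (hm : 0 < m) (han : a ≤ n) (ham : a ≤ m) :
    (a ≤ n % m ∧ (n - a) % m = n % m - a) ∨
      (n % m < a ∧ (n - a) % m = n % m + m - a) := by
  have hd := Nat.div_add_mod n m
  have hrm : n % m < m := Nat.mod_lt _ hm
  by_cases h : a ≤ n % m
  · left
    refine ⟨h, ?_⟩
    have he : n - a = m * (n / m) + (n % m - a) := by omega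
    rw [he, Nat.mul_add_mod]
    exact Nat.mod_eq_of_lt (by omega)
  · right
    have hmn : m ≤ n := by
      by_contra hmn
      have : n % m = n := Nat.mod_eq_of_lt (by omega)
      omega
    have hq : 1 ≤ n / m := (Nat.one_le_div_iff hm).mpr hmn
    refine ⟨by omega, ?_⟩
    have he : n - a = m * (n / m - 1) + (n % m + m - a) := by
      have hmx : m * (n / m) = m * (n / m - 1) + m := by
        obtain ⟨k, hk⟩ := Nat.exists_eq_add_of_le hq
        rw [hk, Nat.add_sub_cancel_left]
        ring
      omega
    rw [he, Nat.mul_add_mod]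
    exact Nat.mod_eq_of_lt (by omega)

set_option maxHeartbeats 2000000 in
/-- NIM({1,L,L+1};n), L even ≥ 2: second player wins iff n mod 2L is an even
number in {0,2,...,L-2}. -/
theorem nim_one_L_Lsucc_even (L : ℕ) (hL : Even L) (hL2 : 2 ≤ L)
    (P : ℕ → Prop)
    (hP : ∀ n, P n ↔ ∀ a ∈ ({1, L, L + 1} : Finset ℕ), a ≤ n → ¬ P (n - a)) :
    ∀ n, P n ↔ (Even (n % (2 * L)) ∧ n % (2 * L) ≤ L - 2) := by
  intro n
  induction n using Nat.strong_induction_on with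
  | _ n ih =>
    rw [hP n]
    simp only [Finset.mem_insert, Finset.mem_singleton, forall_eq_or_imp, forall_eq]
    have hm : 0 < 2 * L := by omega
    have e1 : (1 ≤ n → ¬ P (n - 1)) ↔
        (1 ≤ n → ¬ ((n - 1) % (2 * L) % 2 = 0 ∧ (n - 1) % (2 * L) ≤ L - 2)) := by
      apply imp_congr_right; intro h1
      rw [ih (n - 1) (by omega), Nat.even_iff]
    have e2 : (L ≤ n → ¬ P (n - L)) ↔
        (L ≤ n → ¬ ((n - L) % (2 * L) % 2 = 0 ∧ (n - L) % (2 * L) ≤ L - 2)) := by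
      apply imp_congr_right; intro h1
      rw [ih (n - L) (by omega), Nat.even_iff]
    have e3 : (L + 1 ≤ n → ¬ P (n - (L + 1))) ↔
        (L + 1 ≤ n → ¬ ((n - (L + 1)) % (2 * L) % 2 = 0 ∧ (n - (L + 1)) % (2 * L) ≤ L - 2)) := by
      apply imp_congr_right; intro h1
      rw [ih (n - (L + 1)) (by omega), Nat.even_iff]
    rw [e1, e2, e3, Nat.even_iff]
    have h1 := fun h : 1 ≤ n => sub_mod_cases (2 * L) 1 n hm h (by omega)
    have h2 := fun h : L ≤ n => sub_mod_cases (2 * L) L n hm h (by omega)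
    have h3 := fun h : L + 1 ≤ n => sub_mod_cases (2 * L) (L + 1) n hm h (by omega)
    have hr : n % (2 * L) < 2 * L := Nat.mod_lt _ hm
    have hrn : n % (2 * L) ≤ n := Nat.mod_le _ _
    have hLe : L % 2 = 0 := Nat.even_iff.mp hL
    clear hP ih e1 e2 e3 hL
    generalize hx1 : (n - 1) % (2 * L) = x1 at h1 ⊢
    generalize hx2 : (n - L) % (2 * L) = x2 at h2 ⊢
    generalize hx3 : (n - (L + 1)) % (2 * L) = x3 at h3 ⊢
    generalize hx0 : n % (2 * L) = r at h1 h2 h3 hr hrn ⊢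
    omega
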